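/- For every v ∈ {1,…,V}, the map b ↦ μ(b,v) is non-decreasing on {1,…,B}: if 1 ≤ b ≤ b' ≤ B then μ(b,v) ≤ μ(b',v). -/
import Mathlib


/-- `delta S hS c h r b v` is δ(b,v): δ(b,0) = 0 and
δ(b,v) = h(b) + min_{s ∈ S} (c(s) − s·(r(v) + Σ_{i=0}^{v−1} δ(b,i))). -/
noncomputable def delta (S : Finset ℝ) (hS : S.Nonempty) (c : ℝ → ℝ) (h r : ℕ → ℝ)
    (b : ℕ) : ℕ → ℝ
  | 0 => 0
  | v + 1 => h b + S.inf' hS (fun s =>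
      c s - s * (r (v + 1) + ∑ i ∈ (Finset.range (v + 1)).attach, delta S hS c h r b i.1))
decreasing_by exact Finset.mem_range.mp i.2

/-- `sigma S hS c h r b v` is σ(b,v) = Σ_{i=0}^{v} δ(b,i). -/
noncomputable def sigma (S : Finset ℝ) (hS : S.Nonempty) (c : ℝ → ℝ) (h r : ℕ → ℝ)
    (b v : ℕ) : ℝ :=
  ∑ i ∈ Finset.range (v + 1), delta S hS c h r b i

open Classical

/-- `gmin S hS c x` = the least element of the set of minimizers over s ∈ S of c(s) − s·x. -/
noncomputable def gmin (S : Finset ℝ) (hS : S.Nonempty) (c : ℝ → ℝ) (x : ℝ) : ℝ :=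
  (S.filter (fun s => ∀ s' ∈ S, c s - s * x ≤ c s' - s' * x)).min'
    (by
      obtain ⟨s, hs, hmin⟩ := S.exists_min_image (fun s => c s - s * x) hS
      exact ⟨s, Finset.mem_filter.mpr ⟨hs, fun s' hs' => hmin s' hs'⟩⟩)

/-- μ(b,v) = g(r(v) + σ(b,v−1)). -/
noncomputable def mu (S : Finset ℝ) (hS : S.Nonempty) (c : ℝ → ℝ) (h r : ℕ → ℝ)
    (b v : ℕ) : ℝ :=
  gmin S hS c (r v + sigma S hS c h r b (v - 1))


lemma delta_succ (S : Finset ℝ) (hS : S.Nonempty) (c : ℝ → ℝ) (h r : ℕ → ℝ) (b v : ℕ) :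
    delta S hS c h r b (v + 1)
      = h b + S.inf' hS (fun s => c s - s * (r (v + 1) + sigma S hS c h r b v)) := by
  rw [delta]
  congr 1
  apply Finset.inf'_congr _ rfl
  intro s _
  rw [Finset.sum_attach (Finset.range (v+1)) (fun i => delta S hS c h r b i)]
  rfl

lemma sigma_succ (S : Finset ℝ) (hS : S.Nonempty) (c : ℝ → ℝ) (h r : ℕ → ℝ) (b v : ℕ) :
    sigma S hS c h r b (v + 1)
      = sigma S hS c h r b v + delta S hS c h r b (v + 1) := by
  rw [sigma, sigma, Finset.sum_range_succ]

lemma gmin_spec (S : Finset ℝ) (hS : S.Nonempty) (c : ℝ → ℝ) (x : ℝ) :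
    gmin S hS c x ∈ S ∧ ∀ s' ∈ S, c (gmin S hS c x) - gmin S hS c x * x ≤ c s' - s' * x := by
  have := Finset.min'_mem (S.filter (fun s => ∀ s' ∈ S, c s - s * x ≤ c s' - s' * x))
    (by
      obtain ⟨s, hs, hmin⟩ := S.exists_min_image (fun s => c s - s * x) hS
      exact ⟨s, Finset.mem_filter.mpr ⟨hs, fun s' hs' => hmin s' hs'⟩⟩)
  rw [Finset.mem_filter] at this
  exact this

lemma gmin_mono (S : Finset ℝ) (hS : S.Nonempty) (c : ℝ → ℝ) {x x' : ℝ} (hxx : x ≤ x') :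
    gmin S hS c x ≤ gmin S hS c x' := by
  rcases eq_or_lt_of_le hxx with heq | hlt
  · rw [heq]
  by_contra hcon
  push_neg at hcon
  obtain ⟨hm1, hmin1⟩ := gmin_spec S hS c x
  obtain ⟨hm2, hmin2⟩ := gmin_spec S hS c x'
  have h1 := hmin1 _ hm2
  have h2 := hmin2 _ hm1
  nlinarith

/-- For each v ∈ {1,…,V}, b ↦ μ(b,v) is non-decreasing on {1,…,B}. -/
theorem stmt8
    (S : Finset ℝ) (hS : S.Nonempty) (hS01 : ∀ s ∈ S, s ∈ Set.Icc (0 : ℝ) 1)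
    (c : ℝ → ℝ) (hc0 : ∀ s ∈ S, 0 ≤ c s)
    (hcmono : ∀ s ∈ S, ∀ s' ∈ S, s ≤ s' → c s ≤ c s')
    (h : ℕ → ℝ) (hh0 : ∀ b, 0 ≤ h b) (hhmono : Monotone h)
    (r : ℕ → ℝ) (hrmono : Monotone r) (hr0 : r 0 = 0) (hrpos : ∀ v, 1 ≤ v → 0 < r v)
    (B V : ℕ) (hB : 0 < B) (hV : 0 < V)
    :
    ∀ v, 1 ≤ v → v ≤ V → ∀ b b', 1 ≤ b → b ≤ b' → b' ≤ B →
      mu S hS c h r b v ≤ mu S hS c h r b' v := by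
  have hsigma : ∀ b b' : ℕ, b ≤ b' → ∀ v, sigma S hS c h r b v ≤ sigma S hS c h r b' v := by
    intro b b' hbb v
    induction v with
    | zero => simp [sigma, delta]
    | succ v ih =>
      rw [sigma_succ, sigma_succ, delta_succ, delta_succ]
      have hh := hhmono hbb
      have key : sigma S hS c h r b v
            + S.inf' hS (fun s => c s - s * (r (v + 1) + sigma S hS c h r b v))
          ≤ sigma S hS c h r b' v
            + S.inf' hS (fun s => c s - s * (r (v + 1) + sigma S hS c h r b' v)) := by
        rw [← sub_le_iff_le_add']
        apply Finset.le_inf'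
        intro s hs
        have hinf := Finset.inf'_le
          (fun s => c s - s * (r (v + 1) + sigma S hS c h r b v)) hs
        obtain ⟨hs0, hs1⟩ := hS01 s hs
        nlinarith
      linarith
  intro v hv1 hvV b b' hb1 hbb hbB
  unfold mu
  apply gmin_mono
  have := hsigma b b' hbb (v - 1)
  linarith
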